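/- In the Yokonuma–Hecke algebra Y_{d,n}(u), for every fixed 1 ≤ j ≤ n−2, the two-sided ideal generated by the set {r_{i,i+1} : 1 ≤ i ≤ n−2} equals the two-sided ideal generated by the single element r_{j,j+1}. In particular, with γ := g_1 ⋯ g_{n−1}, one has γ^{i−1} r_{1,2} = r_{i,i+1} γ^{i−1} for all 1 ≤ i ≤ n−2. -/

import Mathlib

noncomputable section

open scoped BigOperators

/-- Index type for the generators of the Yokonuma–Hecke algebra `Y_{d,n}(u)`:
`Sum.inl i` encodes the braiding generator `g_{i+1}` and `Sum.inr j` the framing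
generator `t_{j+1}` (`0`-based encoding of the `1`-based generators). -/
abbrev YHIdx (n : ℕ) := Sum (Fin (n - 1)) (Fin n)

/-- The free `ℂ`-algebra on the generators `g_1, …, g_{n-1}, t_1, …, t_n`. -/
abbrev YHFree (n : ℕ) := FreeAlgebra ℂ (YHIdx n)

/-- The generator `g_i` (1-based) of the free algebra; junk value `0` out of range. -/
def gF (n i : ℕ) : YHFree n :=
  if h : 1 ≤ i ∧ i ≤ n - 1 then FreeAlgebra.ι ℂ (Sum.inl ⟨i - 1, by omega⟩) else 0

/-- The generator `t_j` (1-based) of the free algebra; junk value `0` out of range. -/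
def tF (n j : ℕ) : YHFree n :=
  if h : 1 ≤ j ∧ j ≤ n then FreeAlgebra.ι ℂ (Sum.inr ⟨j - 1, by omega⟩) else 0

/-- The element `e_i := (1/d) ∑_{s=0}^{d-1} t_i^s t_{i+1}^{d-s}` of the free algebra. -/
def eF (d n i : ℕ) : YHFree n :=
  (d : ℂ)⁻¹ • ∑ s ∈ Finset.range d, tF n i ^ s * tF n (i + 1) ^ (d - s)

/-- The defining relations of the Yokonuma–Hecke algebra `Y_{d,n}(u)`. -/
inductive YHRel (d n : ℕ) (u : ℂ) : YHFree n → YHFree n → Prop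
  | g_comm {i j : ℕ} (hi : 1 ≤ i) (hij : i + 1 < j) (hj : j ≤ n - 1) :
      YHRel d n u (gF n i * gF n j) (gF n j * gF n i)
  | braid {i : ℕ} (hi : 1 ≤ i) (hi' : i + 1 ≤ n - 1) :
      YHRel d n u (gF n i * gF n (i + 1) * gF n i)
        (gF n (i + 1) * gF n i * gF n (i + 1))
  | t_comm {i j : ℕ} (hi : 1 ≤ i) (hi' : i ≤ n) (hj : 1 ≤ j) (hj' : j ≤ n) :
      YHRel d n u (tF n i * tF n j) (tF n j * tF n i)
  | t_pow {i : ℕ} (hi : 1 ≤ i) (hi' : i ≤ n) : YHRel d n u (tF n i ^ d) 1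
  | g_t {i : ℕ} (hi : 1 ≤ i) (hi' : i ≤ n - 1) :
      YHRel d n u (gF n i * tF n i) (tF n (i + 1) * gF n i)
  | g_t' {i : ℕ} (hi : 1 ≤ i) (hi' : i ≤ n - 1) :
      YHRel d n u (gF n i * tF n (i + 1)) (tF n i * gF n i)
  | g_t_comm {i j : ℕ} (hi : 1 ≤ i) (hi' : i ≤ n - 1) (hj : 1 ≤ j) (hj' : j ≤ n)
      (h1 : j ≠ i) (h2 : j ≠ i + 1) :
      YHRel d n u (gF n i * tF n j) (tF n j * gF n i)
  | quad {i : ℕ} (hi : 1 ≤ i) (hi' : i ≤ n - 1) :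
      YHRel d n u (gF n i ^ 2)
        (1 + (u - 1) • eF d n i + (u - 1) • (eF d n i * gF n i))

/-- The Yokonuma–Hecke algebra `Y_{d,n}(u)`: the quotient of the free algebra on the
generators `g_1, …, g_{n-1}, t_1, …, t_n` by (the two-sided ideal generated by) the
defining relations. -/
abbrev YH (d n : ℕ) (u : ℂ) := RingQuot (YHRel d n u)

/-- The generator `g_i` of `Y_{d,n}(u)` (1-based). -/
def yg (d n : ℕ) (u : ℂ) (i : ℕ) : YH d n u :=
  RingQuot.mkAlgHom ℂ (YHRel d n u) (gF n i)

/-- The generator `t_j` of `Y_{d,n}(u)` (1-based). -/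
def yt (d n : ℕ) (u : ℂ) (j : ℕ) : YH d n u :=
  RingQuot.mkAlgHom ℂ (YHRel d n u) (tF n j)

/-- The idempotent `e_i = (1/d) ∑_{s=0}^{d-1} t_i^s t_{i+1}^{d-s}` in `Y_{d,n}(u)`. -/
def ye (d n : ℕ) (u : ℂ) (i : ℕ) : YH d n u :=
  (d : ℂ)⁻¹ • ∑ s ∈ Finset.range d, yt d n u i ^ s * yt d n u (i + 1) ^ (d - s)

/-- The element `e_{i,j} = (1/d) ∑_{s=0}^{d-1} t_i^s t_j^{d-s}` in `Y_{d,n}(u)`. -/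
def yeij (d n : ℕ) (u : ℂ) (i j : ℕ) : YH d n u :=
  (d : ℂ)⁻¹ • ∑ s ∈ Finset.range d, yt d n u i ^ s * yt d n u j ^ (d - s)

/-- The Steinberg-type element
`g_{i,i+1} = 1 + g_i + g_{i+1} + g_i g_{i+1} + g_{i+1} g_i + g_i g_{i+1} g_i`. -/
def ygSt (d n : ℕ) (u : ℂ) (i : ℕ) : YH d n u :=
  1 + yg d n u i + yg d n u (i + 1) + yg d n u i * yg d n u (i + 1)
    + yg d n u (i + 1) * yg d n u i + yg d n u i * yg d n u (i + 1) * yg d n u i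

/-- The element `r_{i,i+1} = e_i e_{i+1} g_{i,i+1}` of `Y_{d,n}(u)`. -/
def yr (d n : ℕ) (u : ℂ) (i : ℕ) : YH d n u :=
  ye d n u i * ye d n u (i + 1) * ygSt d n u i

/-- The element `c_{i,i+1} = (∑_{k=0}^{d-1} t_i^k) e_i e_{i+1} g_{i,i+1}` of `Y_{d,n}(u)`. -/
def yc (d n : ℕ) (u : ℂ) (i : ℕ) : YH d n u :=
  (∑ k ∈ Finset.range d, yt d n u i ^ k) *
    (ye d n u i * ye d n u (i + 1) * ygSt d n u i)


/-- The element `γ = g_1 g_2 ⋯ g_{n-1}` of `Y_{d,n}(u)`. -/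
def ygam (d n : ℕ) (u : ℂ) : YH d n u :=
  ((List.range (n - 1)).map fun k => yg d n u (k + 1)).prod
namespace YHAux

variable {d n : ℕ} {u : ℂ}

local notation "mk" => RingQuot.mkAlgHom ℂ (YHRel d n u)

lemma mk_eF (i : ℕ) : mk (eF d n i) = ye d n u i := by
  simp [eF, ye, yt, map_sum]

lemma rel_g_comm {i j : ℕ} (hi : 1 ≤ i) (hij : i + 1 < j) (hj : j ≤ n - 1) :
    yg d n u i * yg d n u j = yg d n u j * yg d n u i := by
  unfold yg; rw [← map_mul, ← map_mul]
  exact RingQuot.mkAlgHom_rel ℂ (YHRel.g_comm (u := u) (d := d) hi hij hj)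

lemma rel_braid {i : ℕ} (hi : 1 ≤ i) (hi' : i + 1 ≤ n - 1) :
    yg d n u i * yg d n u (i + 1) * yg d n u i
      = yg d n u (i + 1) * yg d n u i * yg d n u (i + 1) := by
  unfold yg; rw [← map_mul, ← map_mul, ← map_mul, ← map_mul]
  exact RingQuot.mkAlgHom_rel ℂ (YHRel.braid (u := u) (d := d) hi hi')

lemma rel_t_comm {i j : ℕ} (hi : 1 ≤ i) (hi' : i ≤ n) (hj : 1 ≤ j) (hj' : j ≤ n) :
    yt d n u i * yt d n u j = yt d n u j * yt d n u i := by
  unfold yt; rw [← map_mul, ← map_mul]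
  exact RingQuot.mkAlgHom_rel ℂ (YHRel.t_comm (u := u) (d := d) hi hi' hj hj')

lemma rel_t_pow {i : ℕ} (hi : 1 ≤ i) (hi' : i ≤ n) : yt d n u i ^ d = 1 := by
  unfold yt; rw [← map_pow, ← (map_one mk)]
  exact RingQuot.mkAlgHom_rel ℂ (YHRel.t_pow (u := u) hi hi')

lemma rel_g_t {i : ℕ} (hi : 1 ≤ i) (hi' : i ≤ n - 1) :
    yg d n u i * yt d n u i = yt d n u (i + 1) * yg d n u i := by
  unfold yg yt; rw [← map_mul, ← map_mul]
  exact RingQuot.mkAlgHom_rel ℂ (YHRel.g_t (u := u) (d := d) hi hi')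

lemma rel_g_t' {i : ℕ} (hi : 1 ≤ i) (hi' : i ≤ n - 1) :
    yg d n u i * yt d n u (i + 1) = yt d n u i * yg d n u i := by
  unfold yg yt; rw [← map_mul, ← map_mul]
  exact RingQuot.mkAlgHom_rel ℂ (YHRel.g_t' (u := u) (d := d) hi hi')

lemma rel_g_t_comm {i j : ℕ} (hi : 1 ≤ i) (hi' : i ≤ n - 1) (hj : 1 ≤ j) (hj' : j ≤ n)
    (h1 : j ≠ i) (h2 : j ≠ i + 1) :
    yg d n u i * yt d n u j = yt d n u j * yg d n u i := by
  unfold yg yt; rw [← map_mul, ← map_mul]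
  exact RingQuot.mkAlgHom_rel ℂ (YHRel.g_t_comm (u := u) (d := d) hi hi' hj hj' h1 h2)

lemma rel_quad {i : ℕ} (hi : 1 ≤ i) (hi' : i ≤ n - 1) :
    yg d n u i ^ 2
      = 1 + (u - 1) • ye d n u i + (u - 1) • (ye d n u i * yg d n u i) := by
  have h := RingQuot.mkAlgHom_rel ℂ (YHRel.quad (u := u) (d := d) hi hi')
  simp only [map_pow, map_add, map_one, map_smul, map_mul, mk_eF] at h
  exact h

end YHAux

namespace YHAux

variable {d n : ℕ} {u : ℂ}

lemma pow_swap {M : Type*} [Monoid M] {a b b' : M} (h : a * b = b' * a) (s : ℕ) :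
    a * b ^ s = b' ^ s * a := by
  induction s with
  | zero => simp
  | succ k ih =>
      rw [pow_succ', pow_succ', ← mul_assoc, h, mul_assoc, ih, ← mul_assoc]

lemma conj3 {M : Type*} [Semigroup M] {A x B t t' : M} (h : x * t = t' * x)
    (hB : t * B = B * t) (hA : t' * A = A * t') :
    A * (x * B) * t = t' * (A * (x * B)) := by
  rw [mul_assoc, mul_assoc, ← hB, ← mul_assoc x t B, h, mul_assoc, ← mul_assoc A t', ← hA,
    mul_assoc]

lemma swap_two {M : Type*} [Monoid M] {γ x x' y y' : M} (hx : γ * x = x' * γ)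
    (hy : γ * y = y' * γ) (s r : ℕ) : γ * (x ^ s * y ^ r) = x' ^ s * y' ^ r * γ := by
  rw [← mul_assoc, pow_swap hx, mul_assoc, pow_swap hy, ← mul_assoc]

/-- Sum over `range d` is invariant under shifting mod `d`. -/
lemma sum_range_mod_shift {M : Type*} [AddCommMonoid M] {d a : ℕ} (ha : a < d) (F : ℕ → M) :
    ∑ b ∈ Finset.range d, F ((a + b) % d) = ∑ b ∈ Finset.range d, F b := by
  refine Finset.sum_nbij' (fun b => (a + b) % d) (fun c => (c + (d - a)) % d) ?_ ?_ ?_ ?_ ?_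
  · intro b hb; exact Finset.mem_range.2 (Nat.mod_lt _ (by omega))
  · intro c hc; exact Finset.mem_range.2 (Nat.mod_lt _ (by omega))
  · intro b hb
    show ((a + b) % d + (d - a)) % d = b
    rw [Nat.mod_add_mod]
    have h2 : a + b + (d - a) = b + d := by omega
    rw [h2, Nat.add_mod_right, Nat.mod_eq_of_lt (Finset.mem_range.1 hb)]
  · intro c hc
    show (a + (c + (d - a)) % d) % d = c
    rw [Nat.add_mod_mod]
    have h2 : a + (c + (d - a)) = c + d := by omega
    rw [h2, Nat.add_mod_right, Nat.mod_eq_of_lt (Finset.mem_range.1 hc)]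
  · intro b hb; rfl

/-- Sum over `range d` is invariant under reflection mod `d`. -/
lemma sum_range_mod_reflect {M : Type*} [AddCommMonoid M] {d : ℕ} (F : ℕ → M) :
    ∑ s ∈ Finset.range d, F ((d - s) % d) = ∑ s ∈ Finset.range d, F s := by
  rcases Nat.eq_zero_or_pos d with rfl | hd
  · simp
  have inv : ∀ b < d, (d - (d - b) % d) % d = b := by
    intro b hb'
    rcases Nat.eq_zero_or_pos b with rfl | hbpos
    · simp
    · rw [Nat.mod_eq_of_lt (show d - b < d by omega),
        Nat.sub_sub_self (show b ≤ d by omega), Nat.mod_eq_of_lt hb']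
  refine Finset.sum_nbij' (fun s => (d - s) % d) (fun s => (d - s) % d) ?_ ?_ ?_ ?_ ?_
  · intro b hb; exact Finset.mem_range.2 (Nat.mod_lt _ (by omega))
  · intro c hc; exact Finset.mem_range.2 (Nat.mod_lt _ (by omega))
  · intro b hb; exact inv b (Finset.mem_range.1 hb)
  · intro c hc; exact inv c (Finset.mem_range.1 hc)
  · intro b hb; rfl

/-- The summand `t_i^s t_{i+1}^{d-s}` in `e_i`. -/
def yf (d n : ℕ) (u : ℂ) (i s : ℕ) : YH d n u :=
  yt d n u i ^ s * yt d n u (i + 1) ^ (d - s)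

lemma ye_eq (i : ℕ) :
    ye d n u i = (d : ℂ)⁻¹ • ∑ s ∈ Finset.range d, yf d n u i s := rfl

section
variable (hd : 1 ≤ d) {i : ℕ} (hi : 1 ≤ i) (hi' : i + 1 ≤ n)
include hd hi hi'

lemma yf_mul {a b : ℕ} (ha : a < d) (hb : b < d) :
    yf d n u i a * yf d n u i b = yf d n u i ((a + b) % d) := by
  have hc : Commute (yt d n u i) (yt d n u (i + 1)) :=
    rel_t_comm hi (by omega) (by omega) hi'
  have key : ∀ p q r s : ℕ, yt d n u i ^ p * yt d n u (i+1) ^ q *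
      (yt d n u i ^ r * yt d n u (i+1) ^ s)
      = yt d n u i ^ (p + r) * yt d n u (i+1) ^ (q + s) := by
    intro p q r s
    rw [mul_assoc (yt d n u i ^ p), ← mul_assoc (yt d n u (i+1) ^ q),
      ((hc.symm.pow_pow q r).eq : _ = _), mul_assoc (yt d n u i ^ r),
      ← mul_assoc (yt d n u i ^ p), ← pow_add, ← pow_add]
  unfold yf
  rw [key]
  rcases lt_or_ge (a + b) d with h | h
  · rw [Nat.mod_eq_of_lt h]
    have h2 : d - a + (d - b) = (d - (a + b)) + d := by omega
    rw [h2, pow_add (yt d n u (i+1)) (d - (a+b)) d, rel_t_pow (i := i + 1) (by omega) hi',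
      mul_one]
  · have hmod : (a + b) % d = a + b - d := by
      rw [Nat.mod_eq_sub_mod h, Nat.mod_eq_of_lt (show a + b - d < d by omega)]
    rw [hmod]
    have e1 : a + b = (a + b - d) + d := by omega
    have e2 : d - a + (d - b) = d - (a + b - d) := by omega
    conv_lhs => rw [e1]
    conv_lhs => rw [e2]
    rw [pow_add (yt d n u i) (a + b - d) d,
      rel_t_pow (i := i) hi (show i ≤ n by omega), mul_one]

lemma ye_idem : ye d n u i * ye d n u i = ye d n u i := by
  rw [ye_eq, smul_mul_assoc, mul_smul_comm, Finset.sum_mul]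
  have step : ∀ a ∈ Finset.range d,
      yf d n u i a * ∑ s ∈ Finset.range d, yf d n u i s
        = ∑ s ∈ Finset.range d, yf d n u i s := by
    intro a ha
    rw [Finset.mul_sum]
    rw [show ∑ s ∈ Finset.range d, yf d n u i a * yf d n u i s
        = ∑ s ∈ Finset.range d, yf d n u i ((a + s) % d) from
      Finset.sum_congr rfl fun s hs =>
        yf_mul hd hi hi' (Finset.mem_range.1 ha) (Finset.mem_range.1 hs)]
    exact sum_range_mod_shift (Finset.mem_range.1 ha) _
  rw [Finset.sum_congr rfl step, Finset.sum_const, Finset.card_range,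
    ← Nat.cast_smul_eq_nsmul ℂ d, smul_smul, smul_smul]
  congr 1
  have hd0 : (d : ℂ) ≠ 0 := Nat.cast_ne_zero.2 (by omega)
  field_simp

end

end YHAux

namespace YHAux

variable {d n : ℕ} {u : ℂ}

lemma yg_ye_comm (hd : 1 ≤ d) {i : ℕ} (hi : 1 ≤ i) (hi' : i ≤ n - 1) :
    yg d n u i * ye d n u i = ye d n u i * yg d n u i := by
  have hin : i + 1 ≤ n := by omega
  have hc : Commute (yt d n u i) (yt d n u (i + 1)) :=
    rel_t_comm hi (by omega) (by omega) hin
  have step : ∀ s ∈ Finset.range d,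
      yg d n u i * yf d n u i s = yf d n u i ((d - s) % d) * yg d n u i := by
    intro s hs
    have hs' : s < d := Finset.mem_range.1 hs
    have h1 : yg d n u i * yf d n u i s
        = yt d n u (i+1) ^ s * yt d n u i ^ (d - s) * yg d n u i := by
      unfold yf; exact swap_two (rel_g_t hi hi') (rel_g_t' hi hi') s (d - s)
    rw [h1]
    congr 1
    rcases Nat.eq_zero_or_pos s with rfl | hspos
    · unfold yf
      simp only [pow_zero, one_mul, Nat.sub_zero, Nat.mod_self]
      rw [rel_t_pow hi (by omega), rel_t_pow (i := i + 1) (by omega) hin]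
    · rw [Nat.mod_eq_of_lt (show d - s < d by omega)]
      unfold yf
      rw [Nat.sub_sub_self (le_of_lt hs')]
      exact (hc.symm.pow_pow s (d - s)).eq
  rw [ye_eq, mul_smul_comm, smul_mul_assoc, Finset.mul_sum, Finset.sum_mul]
  congr 1
  rw [Finset.sum_congr rfl step]
  exact sum_range_mod_reflect (fun c => yf d n u i c * yg d n u i)

lemma yg_isUnit (hd : 1 ≤ d) (hu : u ≠ 0) {i : ℕ} (hi : 1 ≤ i) (hi' : i ≤ n - 1) :
    IsUnit (yg d n u i) := by
  set g := yg d n u i with hg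
  set e := ye d n u i with he
  have hge : g * e = e * g := yg_ye_comm hd hi hi'
  have hsq : g ^ 2 = 1 + (u - 1) • e + (u - 1) • (e * g) := rel_quad hi hi'
  have hee : e * e = e := ye_idem hd hi (by omega)
  have hegg : e * g ^ 2 = u • e + (u - 1) • (e * g) := by
    rw [hsq, mul_add, mul_add, mul_one, mul_smul_comm, mul_smul_comm, hee, ← mul_assoc, hee]
    module
  have hgh : g * (g + (u⁻¹ - 1) • e + (u⁻¹ - 1) • (e * g)) = 1 := by
    rw [mul_add, mul_add, mul_smul_comm, mul_smul_comm, hge, ← mul_assoc, hge, mul_assoc,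
      ← pow_two, hegg, hsq]
    match_scalars
    · ring
    · field_simp; ring
    · field_simp; ring
  have hhg : (g + (u⁻¹ - 1) • e + (u⁻¹ - 1) • (e * g)) * g = 1 := by
    rw [add_mul, add_mul, smul_mul_assoc, smul_mul_assoc, mul_assoc, ← pow_two, hegg, hsq]
    match_scalars
    · ring
    · field_simp; ring
    · field_simp; ring
  exact ⟨⟨g, _, hgh, hhg⟩, rfl⟩

end YHAux

namespace YHAux

variable {d n : ℕ} {u : ℂ}

/-- Partial product `g_{a+1} g_{a+2} ⋯ g_{a+b}`. -/
def seg (d n : ℕ) (u : ℂ) (a b : ℕ) : YH d n u :=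
  ((List.range b).map fun k => yg d n u (a + k + 1)).prod

lemma seg_zero (a : ℕ) : seg d n u a 0 = 1 := by simp [seg]

lemma seg_one (a : ℕ) : seg d n u a 1 = yg d n u (a + 1) := by
  simp [seg, List.range_succ]

lemma seg_add (a b c : ℕ) : seg d n u a (b + c) = seg d n u a b * seg d n u (a + b) c := by
  unfold seg
  rw [List.range_add, List.map_append, List.prod_append, List.map_map]
  have h2 : List.map ((fun k => yg d n u (a + k + 1)) ∘ fun x => b + x) (List.range c)
      = List.map (fun k => yg d n u (a + b + k + 1)) (List.range c) :=
    List.map_congr_left fun k hk => by simp only [Function.comp_apply]; congr 1; omega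
  rw [h2]

lemma ygam_eq : ygam d n u = seg d n u 0 (n - 1) := by
  simp [ygam, seg]

lemma commute_seg {a b : ℕ} {x : YH d n u}
    (h : ∀ k, a + 1 ≤ k → k ≤ a + b → x * yg d n u k = yg d n u k * x) :
    x * seg d n u a b = seg d n u a b * x := by
  have : Commute x (seg d n u a b) := by
    apply Commute.list_prod_right
    intro y hy
    simp only [List.mem_map, List.mem_range] at hy
    obtain ⟨k, hk, rfl⟩ := hy
    exact h (a + k + 1) (by omega) (by omega)
  exact this.eq

lemma seg_isUnit (hd : 1 ≤ d) (hu : u ≠ 0) {a b : ℕ} (hab : a + b ≤ n - 1) :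
    IsUnit (seg d n u a b) := by
  induction b with
  | zero => rw [seg_zero]; exact isUnit_one
  | succ c ih =>
      rw [show c + 1 = c + 1 from rfl, seg_add a c 1, seg_one]
      exact (ih (by omega)).mul (yg_isUnit hd hu (by omega) (by omega))

lemma ygam_isUnit (hd : 1 ≤ d) (hu : u ≠ 0) : IsUnit (ygam d n u) := by
  rw [ygam_eq]; exact seg_isUnit hd hu (by omega)

lemma gamma_t {i : ℕ} (hi : 1 ≤ i) (hi' : i ≤ n - 1) :
    ygam d n u * yt d n u i = yt d n u (i + 1) * ygam d n u := by
  have hsplit : n - 1 = (i - 1) + (1 + (n - 1 - i)) := by omega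
  rw [ygam_eq, hsplit, seg_add, seg_add, seg_one]
  simp only [Nat.zero_add]
  rw [show i - 1 + 1 = i from by omega]
  refine conj3 (rel_g_t hi hi') ?_ ?_
  · refine commute_seg fun k hk1 hk2 => ?_
    exact (rel_g_t_comm (i := k) (by omega) (by omega) (by omega) (by omega)
      (by omega) (by omega)).symm
  · refine commute_seg fun k hk1 hk2 => ?_
    exact (rel_g_t_comm (i := k) (j := i + 1) (by omega) (by omega) (by omega) (by omega)
      (by omega) (by omega)).symm

lemma gamma_g {i : ℕ} (hi : 1 ≤ i) (hi' : i ≤ n - 2) :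
    ygam d n u * yg d n u i = yg d n u (i + 1) * ygam d n u := by
  have hn2 : 2 ≤ n := by omega
  have hsplit : n - 1 = (i - 1) + (2 + (n - 1 - i - 1)) := by omega
  rw [ygam_eq, hsplit, seg_add, seg_add, show (2 : ℕ) = 1 + 1 from rfl, seg_add, seg_one,
    seg_one]
  simp only [Nat.zero_add]
  rw [show i - 1 + 1 = i from by omega, show i - 1 + (1 + 1) = i + 1 from by omega]
  refine conj3 ?_ ?_ ?_
  · rw [← mul_assoc]
    exact rel_braid hi (by omega)
  · refine commute_seg fun k hk1 hk2 => ?_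
    exact rel_g_comm (i := i) (j := k) (by omega) (by omega) (by omega)
  · refine commute_seg fun k hk1 hk2 => ?_
    exact (rel_g_comm (i := k) (j := i + 1) (by omega) (by omega) (by omega)).symm

end YHAux

namespace YHAux

variable {d n : ℕ} {u : ℂ}

lemma gamma_e {i : ℕ} (hi : 1 ≤ i) (hi' : i ≤ n - 2) :
    ygam d n u * ye d n u i = ye d n u (i + 1) * ygam d n u := by
  have ht1 : ygam d n u * yt d n u i = yt d n u (i + 1) * ygam d n u :=
    gamma_t hi (by omega)
  have ht2 : ygam d n u * yt d n u (i + 1) = yt d n u (i + 2) * ygam d n u :=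
    gamma_t (by omega) (by omega)
  rw [ye_eq, ye_eq, mul_smul_comm, smul_mul_assoc, Finset.mul_sum, Finset.sum_mul]
  congr 1
  refine Finset.sum_congr rfl fun s hs => ?_
  unfold yf
  rw [show i + 1 + 1 = i + 2 from rfl]
  exact swap_two ht1 ht2 s (d - s)

lemma gamma_gSt {i : ℕ} (hi : 1 ≤ i) (hi' : i ≤ n - 3) :
    ygam d n u * ygSt d n u i = ygSt d n u (i + 1) * ygam d n u := by
  have hg1 : ygam d n u * yg d n u i = yg d n u (i + 1) * ygam d n u :=
    gamma_g hi (by omega)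
  have hg2 : ygam d n u * yg d n u (i + 1) = yg d n u (i + 2) * ygam d n u :=
    gamma_g (by omega) (by omega)
  have h3 : ygam d n u * (yg d n u i * yg d n u (i + 1))
      = yg d n u (i + 1) * yg d n u (i + 2) * ygam d n u := by
    rw [← mul_assoc, hg1, mul_assoc, hg2, ← mul_assoc]
  have h4 : ygam d n u * (yg d n u (i + 1) * yg d n u i)
      = yg d n u (i + 2) * yg d n u (i + 1) * ygam d n u := by
    rw [← mul_assoc, hg2, mul_assoc, hg1, ← mul_assoc]
  have h5 : ygam d n u * (yg d n u i * yg d n u (i + 1) * yg d n u i)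
      = yg d n u (i + 1) * yg d n u (i + 2) * yg d n u (i + 1) * ygam d n u := by
    rw [← mul_assoc, ← mul_assoc, hg1, mul_assoc, mul_assoc, ← mul_assoc (ygam d n u), hg2,
      ← mul_assoc, ← mul_assoc, mul_assoc _ (ygam d n u), hg1, ← mul_assoc]
  unfold ygSt
  rw [show i + 1 + 1 = i + 2 from rfl]
  rw [mul_add, mul_add, mul_add, mul_add, mul_add, add_mul, add_mul, add_mul, add_mul, add_mul,
    mul_one, one_mul, hg1, hg2, h3, h4, h5]

lemma gamma_r {i : ℕ} (hi : 1 ≤ i) (hi' : i ≤ n - 3) :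
    ygam d n u * yr d n u i = yr d n u (i + 1) * ygam d n u := by
  have he1 : ygam d n u * ye d n u i = ye d n u (i + 1) * ygam d n u :=
    gamma_e hi (by omega)
  have he2 : ygam d n u * ye d n u (i + 1) = ye d n u (i + 2) * ygam d n u :=
    gamma_e (by omega) (by omega)
  have hst : ygam d n u * ygSt d n u i = ygSt d n u (i + 1) * ygam d n u :=
    gamma_gSt hi hi'
  unfold yr
  rw [show i + 1 + 1 = i + 2 from rfl]
  rw [← mul_assoc, ← mul_assoc, he1, mul_assoc, mul_assoc, ← mul_assoc (ygam d n u), he2,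
    ← mul_assoc, ← mul_assoc, mul_assoc _ (ygam d n u), hst, ← mul_assoc]

lemma part2 (hn : 3 ≤ n) : ∀ m : ℕ, m + 1 ≤ n - 2 →
    ygam d n u ^ m * yr d n u 1 = yr d n u (m + 1) * ygam d n u ^ m := by
  intro m
  induction m with
  | zero => intro _; simp
  | succ k ih =>
      intro hk
      have hk' : k + 1 ≤ n - 2 := by omega
      rw [pow_succ', mul_assoc, ih hk', ← mul_assoc, gamma_r (by omega) (by omega),
        mul_assoc, ← pow_succ']

end YHAux


/-- In `Y_{d,n}(u)`, for each fixed `1 ≤ j ≤ n-2`, the two-sided ideal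
generated by `{r_{i,i+1} : 1 ≤ i ≤ n-2}` equals the two-sided ideal generated by the
single element `r_{j,j+1}`; moreover `γ^{i-1} r_{1,2} = r_{i,i+1} γ^{i-1}` for all
`1 ≤ i ≤ n-2`, where `γ = g_1 ⋯ g_{n-1}`. -/
theorem stmt4 (d n : ℕ) (hd : 1 ≤ d) (hn : 3 ≤ n) (u : ℂ) (hu : u ≠ 0) :
    (∀ j : ℕ, 1 ≤ j → j ≤ n - 2 →
      TwoSidedIdeal.span {a : YH d n u | ∃ i : ℕ, 1 ≤ i ∧ i ≤ n - 2 ∧ a = yr d n u i} =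
        TwoSidedIdeal.span {yr d n u j}) ∧
    (∀ i : ℕ, 1 ≤ i → i ≤ n - 2 →
      ygam d n u ^ (i - 1) * yr d n u 1 = yr d n u i * ygam d n u ^ (i - 1)) := by
  have hpart2 : ∀ i : ℕ, 1 ≤ i → i ≤ n - 2 →
      ygam d n u ^ (i - 1) * yr d n u 1 = yr d n u i * ygam d n u ^ (i - 1) := by
    intro i hi1 hi2
    have h := YHAux.part2 (d := d) (u := u) hn (i - 1) (by omega)
    rwa [show i - 1 + 1 = i from by omega] at h
  refine ⟨?_, hpart2⟩
  intro j hj1 hj2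
  obtain ⟨v, hv⟩ := YHAux.ygam_isUnit (d := d) (n := n) (u := u) hd hu
  have coep : ∀ k : ℕ, ((v ^ k : (YH d n u)ˣ) : YH d n u) = ygam d n u ^ k := by
    intro k; rw [← hv]; exact Units.val_pow_eq_pow_val v k
  have heq : ∀ i : ℕ, 1 ≤ i → i ≤ n - 2 →
      ((v ^ (i - 1) : (YH d n u)ˣ) : YH d n u) * ((v ^ (j - 1))⁻¹ : (YH d n u)ˣ)
          * yr d n u j
          * (((v ^ (j - 1) : (YH d n u)ˣ) : YH d n u) * ((v ^ (i - 1))⁻¹ : (YH d n u)ˣ))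
        = yr d n u i := by
    intro i hi1 hi2
    have hki : ((v ^ (i - 1) : (YH d n u)ˣ) : YH d n u) * yr d n u 1
        = yr d n u i * ((v ^ (i - 1) : (YH d n u)ˣ) : YH d n u) := by
      rw [coep (i - 1)]; exact hpart2 i hi1 hi2
    have hkj : ((v ^ (j - 1) : (YH d n u)ˣ) : YH d n u) * yr d n u 1
        = yr d n u j * ((v ^ (j - 1) : (YH d n u)ˣ) : YH d n u) := by
      rw [coep (j - 1)]; exact hpart2 j hj1 hj2
    calc ((v ^ (i - 1) : (YH d n u)ˣ) : YH d n u) * ((v ^ (j - 1))⁻¹ : (YH d n u)ˣ)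
            * yr d n u j
            * (((v ^ (j - 1) : (YH d n u)ˣ) : YH d n u) * ((v ^ (i - 1))⁻¹ : (YH d n u)ˣ))
        = ((v ^ (i - 1) : (YH d n u)ˣ) : YH d n u) * (((v ^ (j - 1))⁻¹ : (YH d n u)ˣ)
            * (((v ^ (j - 1) : (YH d n u)ˣ) : YH d n u) * (yr d n u 1
            * ((v ^ (i - 1))⁻¹ : (YH d n u)ˣ)))) := by
          simp only [mul_assoc]
          rw [← mul_assoc (yr d n u j), ← hkj, mul_assoc]
      _ = ((v ^ (i - 1) : (YH d n u)ˣ) : YH d n u) * (yr d n u 1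
            * ((v ^ (i - 1))⁻¹ : (YH d n u)ˣ)) := by
          rw [Units.inv_mul_cancel_left]
      _ = yr d n u i * ((v ^ (i - 1) : (YH d n u)ˣ) : YH d n u)
            * ((v ^ (i - 1))⁻¹ : (YH d n u)ˣ) := by
          rw [← mul_assoc, hki, mul_assoc]
      _ = yr d n u i := Units.mul_inv_cancel_right _ _
  refine le_antisymm ?_ ?_
  · rw [SetLike.le_def]
    intro x hx
    rw [TwoSidedIdeal.mem_span_iff] at hx
    refine hx _ ?_
    intro a ha
    obtain ⟨i, hi1, hi2, rfl⟩ := ha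
    have h0 : yr d n u j ∈ TwoSidedIdeal.span {yr d n u j} :=
      TwoSidedIdeal.subset_span rfl
    have h1 := (TwoSidedIdeal.span {yr d n u j}).mul_mem_left
      (((v ^ (i - 1) : (YH d n u)ˣ) : YH d n u) * ((v ^ (j - 1))⁻¹ : (YH d n u)ˣ))
      (yr d n u j) h0
    have h2 := (TwoSidedIdeal.span {yr d n u j}).mul_mem_right _
      (((v ^ (j - 1) : (YH d n u)ˣ) : YH d n u) * ((v ^ (i - 1))⁻¹ : (YH d n u)ˣ)) h1
    rwa [heq i hi1 hi2] at h2
  · rw [SetLike.le_def]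
    intro x hx
    rw [TwoSidedIdeal.mem_span_iff] at hx
    refine hx _ ?_
    intro a ha
    rw [Set.mem_singleton_iff] at ha
    subst ha
    exact TwoSidedIdeal.subset_span ⟨j, hj1, hj2, rfl⟩
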